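/- Let X be a (possibly infinite) set and suppose we are given p_ā ∈ [0,1] for every finite sequence ā of distinct elements of X. Then there exists a probability measure μ on the space of strict total orders of X (with the σ-algebra generated by events {π : a_1 ≻_π ⋯ ≻_π a_n}) such that p_ā = Pr_μ[a_1 ≻ ⋯ ≻ a_n] for every such ā, if and only if p_{(a)} = 1 for every a ∈ X and, for every sequence (a_1,…,a_n) of distinct elements and every a ∉ {a_1,…,a_n}, p_{(a_1,…,a_n)} = Σ_{i=0}^{n} p_{(a_1,…,a_i,a,a_{i+1},…,a_n)}. -/

import Mathlib

open MeasureTheory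

attribute [local instance] Classical.propDecidable

/-- The space of strict total orders on `X`: irreflexive, transitive relations under
which any two distinct elements are comparable. -/
def StrictTotalOrders (X : Type*) : Type _ :=
  {r : X → X → Prop //
    (∀ a, ¬ r a a) ∧ (∀ a b c, r a b → r b c → r a c) ∧ ∀ a b, a ≠ b → r a b ∨ r b a}

/-- The cylinder event that the elements of the list `l` appear in this relative
order: `{π : l₀ ≻_π l₁ ≻_π ⋯}`. -/
def chainEvent {X : Type*} (l : List X) : Set (StrictTotalOrders X) :=
  {π | l.Chain' π.1}

/-- The σ-algebra on the space of strict total orders generated by the cylinder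
events fixing the relative order of finitely many distinct elements. -/
instance ordersMeasurableSpace (X : Type*) : MeasurableSpace (StrictTotalOrders X) :=
  MeasurableSpace.generateFrom {s | ∃ l : List X, l.Nodup ∧ s = chainEvent l}

namespace OrderMarginals
open List


variable {X : Type*}

lemma insertIdx_perm' (a : X) : ∀ (l : List X) (i : ℕ), i ≤ l.length →
    l.insertIdx i a ~ a :: l := by
  intro l
  induction l with
  | nil =>
    intro i hi
    obtain rfl : i = 0 := by simpa using hi
    simp
  | cons b t ih =>
    intro i hi
    match i with
    | 0 => simp
    | (j+1) =>
      rw [List.insertIdx_succ_cons]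
      exact ((ih j (by simpa using hi)).cons b).trans (List.Perm.swap a b t)

lemma nodup_insertIdx {a : X} {l : List X} (hl : l.Nodup) (ha : a ∉ l) {i : ℕ}
    (hi : i ≤ l.length) : (l.insertIdx i a).Nodup :=
  (insertIdx_perm' a l i hi).nodup_iff.2 (by simp [hl, ha])

lemma mem_insertIdx' {a b : X} {l : List X} {i : ℕ} (hi : i ≤ l.length) :
    b ∈ l.insertIdx i a ↔ b = a ∨ b ∈ l := by
  rw [(insertIdx_perm' a l i hi).mem_iff]; simp

lemma toFinset_insertIdx {a : X} {l : List X} {i : ℕ} (hi : i ≤ l.length) :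
    (l.insertIdx i a).toFinset = insert a l.toFinset := by
  rw [List.toFinset_eq_of_perm _ _ (insertIdx_perm' a l i hi)]; simp

lemma insertIdx_ne_nil {a : X} {l : List X} {i : ℕ} (hi : i ≤ l.length) :
    l.insertIdx i a ≠ [] := by
  intro h
  have := (insertIdx_perm' a l i hi).length_eq
  rw [h] at this; simp at this

lemma insertIdx_inj_pos {a : X} : ∀ {l : List X} {i j : ℕ}, a ∉ l → i ≤ l.length →
    j ≤ l.length → l.insertIdx i a = l.insertIdx j a → i = j := by
  intro l
  induction l with
  | nil => intro i j _ hi hj _; simp only [List.length_nil] at hi hj; omega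
  | cons b t ih =>
    intro i j ha hi hj h
    match i, j with
    | 0, 0 => rfl
    | 0, (j+1) =>
      rw [List.insertIdx_zero, List.insertIdx_succ_cons] at h
      exact absurd (by rw [(List.cons.inj h).1]; exact List.mem_cons_self) ha
    | (i+1), 0 =>
      rw [List.insertIdx_zero, List.insertIdx_succ_cons] at h
      exact absurd (by rw [← (List.cons.inj h).1]; exact List.mem_cons_self) ha
    | (i+1), (j+1) =>
      rw [List.insertIdx_succ_cons, List.insertIdx_succ_cons] at h
      have := ih (fun h' => ha (List.mem_cons_of_mem b h')) (by simpa using hi)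
        (by simpa using hj) (List.cons.inj h).2
      omega

lemma exists_insertIdx_filter {a : X} (q : X → Bool) (hq : ∀ x, q x = true ↔ x ≠ a) :
    ∀ {w : List X}, w.Nodup → a ∈ w →
    ∃ i ≤ (w.filter q).length, w = (w.filter q).insertIdx i a := by
  intro w
  induction w with
  | nil => simp
  | cons b t ih =>
    intro hn hb
    have hqa : q a = false := by
      by_contra h
      simp only [Bool.not_eq_false] at h
      exact (hq a).1 h rfl
    by_cases hba : b = a
    · have hat : a ∉ t := fun h => (List.nodup_cons.1 hn).1 (hba ▸ h)
      have ht : t.filter q = t := List.filter_eq_self.2 (by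
        intro x hx
        exact (hq x).2 (fun h => hat (h ▸ hx)))
      refine ⟨0, by simp, ?_⟩
      rw [List.filter_cons, if_neg (by simp [hba, hqa]), ht, List.insertIdx_zero, hba]
    · have hat : a ∈ t := by
        rcases List.mem_cons.1 hb with h | h
        · exact absurd h.symm hba
        · exact h
      obtain ⟨i, hi, hw⟩ := ih (List.nodup_cons.1 hn).2 hat
      have hfc : (b :: t).filter q = b :: t.filter q := by
        rw [List.filter_cons, if_pos (by simp [(hq b).2 hba])]
      refine ⟨i + 1, ?_, ?_⟩
      · rw [hfc]; simpa using Nat.succ_le_succ hi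
      · rw [hfc, List.insertIdx_succ_cons]
        exact congrArg (b :: ·) hw

lemma filter_insertIdx_self {a : X} {q : X → Bool} (hqa : q a = false) :
    ∀ {l : List X} {i : ℕ}, i ≤ l.length → (l.insertIdx i a).filter q = l.filter q := by
  intro l
  induction l with
  | nil =>
    intro i hi; obtain rfl : i = 0 := by simpa using hi
    simp [hqa]
  | cons b t ih =>
    intro i hi
    match i with
    | 0 => simp [hqa]
    | (j+1) =>
      rw [List.insertIdx_succ_cons, List.filter_cons, List.filter_cons,
        ih (by simpa using hi)]



variable {X : Type*} {π : StrictTotalOrders X}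

lemma chain'_pairwise {l : List X} (h : l.Chain' π.1) : l.Pairwise π.1 := by
  haveI : IsTrans X π.1 := ⟨π.2.2.1⟩
  exact List.isChain_iff_pairwise.1 h

lemma chain'_of_sublist {l m : List X} (h : m.Chain' π.1) (hs : l.Sublist m) :
    l.Chain' π.1 := by
  haveI : IsTrans X π.1 := ⟨π.2.2.1⟩
  exact h.sublist hs

lemma chain_eq_of_toFinset_eq {l m : List X} (hl : l.Nodup) (hm : m.Nodup)
    (h : l.toFinset = m.toFinset) (cl : l.Chain' π.1) (cm : m.Chain' π.1) : l = m := by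
  haveI : IsAntisymm X π.1 := ⟨fun a b hab hba => absurd (π.2.2.1 _ _ _ hab hba) (π.2.1 a)⟩
  exact List.Perm.eq_of_pairwise (fun a b _ _ hab hba => absurd (π.2.2.1 _ _ _ hab hba) (π.2.1 a))
    (chain'_pairwise cl) (chain'_pairwise cm) (List.perm_of_nodup_nodup_toFinset_eq hl hm h)

lemma exists_insertIdx_chain (a : X) : ∀ {l : List X}, l.Chain' π.1 → a ∉ l →
    ∃ i ≤ l.length, (l.insertIdx i a).Chain' π.1 := by
  intro l
  induction l with
  | nil => exact fun _ _ => ⟨0, Nat.le_refl 0, by simp [List.Chain']⟩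
  | cons b t ih =>
    intro hc ha
    by_cases hab : π.1 a b
    · exact ⟨0, Nat.zero_le _, by
        rw [List.insertIdx_zero, List.Chain', List.isChain_cons_cons]; exact ⟨hab, hc⟩⟩
    · have hne : a ≠ b := fun h => ha (h ▸ List.mem_cons_self)
      have hba : π.1 b a := ((π.2.2.2 a b hne).resolve_left hab)
      obtain ⟨i, hi, hci⟩ := ih hc.tail (fun h => ha (List.mem_cons_of_mem b h))
      refine ⟨i + 1, Nat.succ_le_succ hi, ?_⟩
      rw [List.insertIdx_succ_cons, List.Chain', List.isChain_cons]
      refine ⟨?_, hci⟩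
      intro y hy
      match i, t with
      | 0, t =>
        rw [List.insertIdx_zero] at hy
        simp only [List.head?_cons, Option.mem_def, Option.some.injEq] at hy
        exact hy ▸ hba
      | (j+1), c :: t' =>
        rw [List.insertIdx_succ_cons] at hy
        simp only [List.head?_cons, Option.mem_def, Option.some.injEq] at hy
        exact hy ▸ (List.isChain_cons_cons.1 hc).1

lemma exists_mem_chainEvent {m : List X} (hm : m.Nodup) : ∃ π, π ∈ chainEvent m := by
  classical
  set r : X → X → Prop := fun x y =>
    (x ∈ m ∧ y ∈ m ∧ m.idxOf x < m.idxOf y) ∨ (x ∈ m ∧ y ∉ m) ∨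
      (x ∉ m ∧ y ∉ m ∧ WellOrderingRel x y) with hr
  have hirr : ∀ a, ¬ r a a := by
    intro a h
    rcases h with ⟨_, _, h⟩ | ⟨h1, h2⟩ | ⟨_, _, h⟩
    · exact absurd h (lt_irrefl _)
    · exact h2 h1
    · exact absurd h (irrefl a)
  have htr : ∀ a b c, r a b → r b c → r a c := by
    intro a b c hab hbc
    rcases hab with ⟨ha, hb, h1⟩ | ⟨ha, hb⟩ | ⟨ha, hb, h1⟩ <;>
      rcases hbc with ⟨hb', hc, h2⟩ | ⟨hb', hc⟩ | ⟨hb', hc, h2⟩ <;>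
        first
          | exact absurd hb' hb
          | exact absurd hb hb'
          | exact Or.inl ⟨ha, hc, lt_trans h1 h2⟩
          | exact Or.inr (Or.inl ⟨ha, hc⟩)
          | exact Or.inr (Or.inr ⟨ha, hc, _root_.trans h1 h2⟩)
  have htot : ∀ a b, a ≠ b → r a b ∨ r b a := by
    intro a b hab
    by_cases ha : a ∈ m <;> by_cases hb : b ∈ m
    · have : m.idxOf a ≠ m.idxOf b := fun h => hab ((List.idxOf_inj ha).1 h)
      rcases Nat.lt_or_ge (m.idxOf a) (m.idxOf b) with h | h
      · exact Or.inl (Or.inl ⟨ha, hb, h⟩)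
      · exact Or.inr (Or.inl ⟨hb, ha, lt_of_le_of_ne h (Ne.symm this)⟩)
    · exact Or.inl (Or.inr (Or.inl ⟨ha, hb⟩))
    · exact Or.inr (Or.inr (Or.inl ⟨hb, ha⟩))
    · rcases trichotomous_of WellOrderingRel a b with h | h | h
      · exact Or.inl (Or.inr (Or.inr ⟨ha, hb, h⟩))
      · exact absurd h hab
      · exact Or.inr (Or.inr (Or.inr ⟨hb, ha, h⟩))
  refine ⟨⟨r, hirr, htr, htot⟩, ?_⟩
  show m.Chain' r
  rw [List.Chain', List.isChain_iff_getElem]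
  intro i hi
  have h1 : i < m.length := by omega
  have h2 : i + 1 < m.length := by omega
  refine Or.inl ⟨List.getElem_mem _, List.getElem_mem _, ?_⟩
  have e1 : m.idxOf (m.get ⟨i, h1⟩) = i := by
    have hlt : m.idxOf (m.get ⟨i, h1⟩) < m.length :=
      List.idxOf_lt_length_iff.2 (List.get_mem _ _)
    have h' : m[m.idxOf (m.get ⟨i, h1⟩)]'hlt = m[i]'h1 := by
      simpa using List.getElem_idxOf (x := m.get ⟨i, h1⟩) (xs := m) hlt
    exact (List.Nodup.getElem_inj_iff hm (hi := hlt) (hj := h1)).1 h'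
  have e2 : m.idxOf (m.get ⟨i + 1, h2⟩) = i + 1 := by
    have hlt : m.idxOf (m.get ⟨i + 1, h2⟩) < m.length :=
      List.idxOf_lt_length_iff.2 (List.get_mem _ _)
    have h' : m[m.idxOf (m.get ⟨i + 1, h2⟩)]'hlt = m[i + 1]'h2 := by
      simpa using List.getElem_idxOf (x := m.get ⟨i + 1, h2⟩) (xs := m) hlt
    exact (List.Nodup.getElem_inj_iff hm (hi := hlt) (hj := h2)).1 h'
  simp only [List.get_eq_getElem] at e1 e2
  rw [e1, e2]
  omega

lemma mem_chainEvent_iff_filter {m l : List X} (hm : m.Nodup) (hl : l.Nodup)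
    (hsub : ∀ x ∈ l, x ∈ m) (hπ : π ∈ chainEvent m) :
    π ∈ chainEvent l ↔ m.filter (fun x => decide (x ∈ l)) = l := by
  constructor
  · intro hc
    refine chain_eq_of_toFinset_eq (hm.filter _) hl ?_ ?_ hc
    · ext x
      simp only [List.mem_toFinset, List.mem_filter, decide_eq_true_eq]
      exact ⟨fun h => h.2, fun h => ⟨hsub x h, h⟩⟩
    · exact chain'_of_sublist hπ (List.filter_sublist (l := m))
  · intro h
    show l.Chain' π.1
    rw [← h]
    exact chain'_of_sublist hπ (List.filter_sublist (l := m))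

lemma exists_atom (π : StrictTotalOrders X) (S : Finset X) :
    ∃ m : List X, m.Nodup ∧ m.toFinset = S ∧ π ∈ chainEvent m := by
  classical
  induction S using Finset.induction with
  | empty => exact ⟨[], by simp, by simp, by simp [chainEvent, List.Chain']⟩
  | @insert a S ha ih =>
    obtain ⟨m, hm, hmS, hc⟩ := ih
    have ham : a ∉ m := by rw [← List.mem_toFinset, hmS]; exact ha
    obtain ⟨i, hi, hci⟩ := exists_insertIdx_chain a hc ham
    refine ⟨m.insertIdx i a, nodup_insertIdx hm ham hi, ?_, hci⟩
    rw [toFinset_insertIdx hi, hmS]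

noncomputable def OS (S : Finset X) : Finset (List X) :=
  S.toList.permutations.toFinset

lemma mem_OS {S : Finset X} {m : List X} :
    m ∈ OS S ↔ m.Nodup ∧ m.toFinset = S := by
  simp only [OS, List.mem_toFinset, List.mem_permutations]
  constructor
  · intro h
    refine ⟨h.nodup_iff.2 (S.nodup_toList), ?_⟩
    rw [List.toFinset_eq_of_perm _ _ h, Finset.toList_toFinset]
  · rintro ⟨h1, h2⟩
    exact List.perm_of_nodup_nodup_toFinset_eq h1 S.nodup_toList
      (by rw [h2, Finset.toList_toFinset])

lemma sum_biUnion_le'' {ι β : Type*} [DecidableEq β] (F : Finset ι) (t : ι → Finset β)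
    (f : β → ENNReal) : ∑ b ∈ F.biUnion t, f b ≤ ∑ i ∈ F, ∑ b ∈ t i, f b := by
  classical
  induction F using Finset.induction with
  | empty => simp
  | @insert a F ha ih =>
    rw [Finset.biUnion_insert, Finset.sum_insert ha]
    refine le_trans ?_ (add_le_add_right ih _)
    calc ∑ b ∈ t a ∪ F.biUnion t, f b
        ≤ ∑ b ∈ t a ∪ F.biUnion t, f b + ∑ b ∈ t a ∩ F.biUnion t, f b := le_self_add
      _ = _ := Finset.sum_union_inter

-- refine_sum, to be appended inside namespace
lemma refine_sum (p : List X → ℝ)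
    (hsum : ∀ (l : List X) (a : X), l.Nodup → l ≠ [] → a ∉ l →
      p l = ∑ i ∈ Finset.range (l.length + 1), p (l.insertIdx i a)) (S : Finset X) :
    ∀ (l : List X), l.Nodup → l ≠ [] → l.toFinset ⊆ S →
      p l = ∑ m ∈ (OS S).filter (fun m => m.filter (fun x => decide (x ∈ l)) = l), p m := by
  suffices H : ∀ (k : ℕ) (l : List X), l.Nodup → l ≠ [] → l.toFinset ⊆ S →
      S.card - l.length = k →
      p l = ∑ m ∈ (OS S).filter (fun m => m.filter (fun x => decide (x ∈ l)) = l), p m by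
    intro l h1 h2 h3; exact H _ l h1 h2 h3 rfl
  intro k
  induction k with
  | zero =>
    intro l h1 h2 h3 hk
    have hcard : l.toFinset.card = l.length := List.toFinset_card_of_nodup h1
    have hle : l.toFinset.card ≤ S.card := Finset.card_le_card h3
    have hSl : S = l.toFinset := by
      refine (Finset.eq_of_subset_of_card_le h3 ?_).symm
      omega
    have hset : (OS S).filter (fun m => m.filter (fun x => decide (x ∈ l)) = l) = {l} := by
      ext m
      simp only [Finset.mem_filter, Finset.mem_singleton, mem_OS]
      constructor
      · rintro ⟨⟨hm1, hm2⟩, hm3⟩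
        have : m.filter (fun x => decide (x ∈ l)) = m := by
          refine List.filter_eq_self.2 ?_
          intro x hx
          simp only [decide_eq_true_eq]
          have hxx : x ∈ m.toFinset := List.mem_toFinset.2 hx
          rw [hm2, hSl, List.mem_toFinset] at hxx
          exact hxx
        rw [this] at hm3; exact hm3
      · rintro rfl
        exact ⟨⟨h1, hSl.symm⟩, List.filter_eq_self.2 (by simp)⟩
    rw [hset, Finset.sum_singleton]
  | succ k ih =>
    intro l h1 h2 h3 hk
    have hcard : l.toFinset.card = l.length := List.toFinset_card_of_nodup h1
    have hssub : l.toFinset ≠ S := by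
      intro h
      rw [← h] at hk
      omega
    obtain ⟨a, haS, hal⟩ := Finset.exists_of_ssubset (ssubset_of_subset_of_ne h3 hssub)
    have hal' : a ∉ l := fun h => hal (List.mem_toFinset.2 h)
    rw [hsum l a h1 h2 hal']
    have hstep : ∀ i ∈ Finset.range (l.length + 1),
        p (l.insertIdx i a) = ∑ m ∈ (OS S).filter
          (fun m => m.filter (fun x => decide (x ∈ l.insertIdx i a)) = l.insertIdx i a), p m := by
      intro i hi
      have hi' : i ≤ l.length := by simpa [Nat.lt_succ_iff] using hi
      refine ih (l.insertIdx i a) (nodup_insertIdx h1 hal' hi') (insertIdx_ne_nil hi') ?_ ?_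
      · rw [toFinset_insertIdx hi']
        exact Finset.insert_subset haS h3
      · rw [List.length_insertIdx_of_le_length hi']
        omega
    rw [Finset.sum_congr rfl hstep]
    set F : ℕ → Finset (List X) := fun i => (OS S).filter
      (fun m => m.filter (fun x => decide (x ∈ l.insertIdx i a)) = l.insertIdx i a) with hF
    have hdisj : (↑(Finset.range (l.length + 1)) : Set ℕ).PairwiseDisjoint F := by
      intro i hi j hj hij
      simp only [Finset.coe_range, Set.mem_Iio] at hi hj
      refine Finset.disjoint_left.2 ?_
      intro m hmi hmj
      simp only [hF, Finset.mem_filter] at hmi hmj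
      have hcong : m.filter (fun x => decide (x ∈ l.insertIdx i a))
          = m.filter (fun x => decide (x ∈ l.insertIdx j a)) := by
        refine List.filter_congr ?_
        intro x _
        rw [decide_eq_decide, mem_insertIdx' (by omega), mem_insertIdx' (by omega)]
      have : l.insertIdx i a = l.insertIdx j a := by
        rw [← hmi.2, ← hmj.2, hcong]
      exact hij (insertIdx_inj_pos hal' (by omega) (by omega) this)
    rw [← Finset.sum_biUnion hdisj]
    congr 1
    ext m
    simp only [Finset.mem_biUnion, Finset.mem_range, hF, Finset.mem_filter]
    constructor
    · rintro ⟨i, hi, hm, hfil⟩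
      refine ⟨hm, ?_⟩
      have hi' : i ≤ l.length := by omega
      have e1 : m.filter (fun x => decide (x ∈ l))
          = (m.filter (fun x => decide (x ∈ l.insertIdx i a))).filter
              (fun x => decide (x ∈ l)) := by
        rw [List.filter_filter]
        refine (List.filter_congr ?_).symm
        intro x _
        by_cases hx : x ∈ l
        · simp [hx, (mem_insertIdx' hi').2 (Or.inr hx)]
        · simp [hx]
      rw [e1, hfil, filter_insertIdx_self (by simp [hal']) hi',
        List.filter_eq_self.2 (by simp)]
    · rintro ⟨hm, hfil⟩
      have ham : a ∈ m := by
        rw [← List.mem_toFinset, (mem_OS.1 hm).2]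
        exact haS
      set w : List X := m.filter (fun x => decide (x = a ∨ x ∈ l)) with hw
      have haw : a ∈ w := List.mem_filter.2 ⟨ham, by simp⟩
      have hwn : w.Nodup := (mem_OS.1 hm).1.filter _
      obtain ⟨i, hilen, hwi⟩ := exists_insertIdx_filter (fun x => decide (x ≠ a))
        (fun x => by simp) hwn haw
      have hwfl : w.filter (fun x => decide (x ≠ a)) = l := by
        rw [hw, List.filter_filter]
        have heq : List.filter (fun x => decide (x ≠ a) && decide (x = a ∨ x ∈ l)) m
            = List.filter (fun x => decide (x ∈ l)) m := by
          refine List.filter_congr ?_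
          intro x hxm
          by_cases hx : x = a
          · simp [hx, hal']
          · by_cases hxl : x ∈ l <;> simp [hx, hxl]
        rw [heq, hfil]
      rw [hwfl] at hwi hilen
      refine ⟨i, by omega, hm, ?_⟩
      have : m.filter (fun x => decide (x ∈ l.insertIdx i a)) = w := by
        rw [hw]
        refine List.filter_congr ?_
        intro x _
        rw [decide_eq_decide, mem_insertIdx' hilen]
      rw [this, hwi]

lemma le_sum_of_cover (p : List X → ℝ)
    (hp : ∀ l : List X, l.Nodup → 0 ≤ p l ∧ p l ≤ 1)
    (hsum : ∀ (l : List X) (a : X), l.Nodup → l ≠ [] → a ∉ l →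
      p l = ∑ i ∈ Finset.range (l.length + 1), p (l.insertIdx i a))
    {l : List X} (hl : l.Nodup) (hl0 : l ≠ [])
    {ι : Type*} (F : Finset ι) (c : ι → List X)
    (hc : ∀ i ∈ F, (c i).Nodup ∧ c i ≠ [])
    (hcov : chainEvent l ⊆ ⋃ i ∈ F, chainEvent (c i)) :
    ENNReal.ofReal (p l) ≤ ∑ i ∈ F, ENNReal.ofReal (p (c i)) := by
  set S : Finset X := l.toFinset ∪ F.sup (fun i => (c i).toFinset) with hS
  have hlS : l.toFinset ⊆ S := Finset.subset_union_left
  have hcS : ∀ i ∈ F, (c i).toFinset ⊆ S := by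
    intro i hi
    refine Finset.Subset.trans ?_ Finset.subset_union_right
    exact Finset.le_sup (f := fun i => (c i).toFinset) hi
  set T : List X → Finset (List X) := fun l' =>
    (OS S).filter (fun m => m.filter (fun x => decide (x ∈ l')) = l') with hT
  have hTsub : T l ⊆ F.biUnion (fun i => T (c i)) := by
    intro m hm
    simp only [hT, Finset.mem_filter, mem_OS] at hm
    obtain ⟨⟨hm1, hm2⟩, hm3⟩ := hm
    obtain ⟨π, hπ⟩ := exists_mem_chainEvent hm1
    have hmem : ∀ x ∈ l, x ∈ m := by
      intro x hx
      rw [← List.mem_toFinset, hm2]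
      exact hlS (List.mem_toFinset.2 hx)
    have hπl : π ∈ chainEvent l :=
      (mem_chainEvent_iff_filter hm1 hl hmem hπ).2 hm3
    obtain ⟨i, hiF, hπc⟩ := by simpa using hcov hπl
    refine Finset.mem_biUnion.2 ⟨i, hiF, ?_⟩
    have hmemc : ∀ x ∈ c i, x ∈ m := by
      intro x hx
      rw [← List.mem_toFinset, hm2]
      exact hcS i hiF (List.mem_toFinset.2 hx)
    simp only [hT, Finset.mem_filter, mem_OS]
    exact ⟨⟨hm1, hm2⟩, (mem_chainEvent_iff_filter hm1 (hc i hiF).1 hmemc hπ).1 hπc⟩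
  have hnn : ∀ m ∈ OS S, 0 ≤ p m := fun m hm => (hp m (mem_OS.1 hm).1).1
  calc ENNReal.ofReal (p l) = ∑ m ∈ T l, ENNReal.ofReal (p m) := by
        rw [refine_sum p hsum S l hl hl0 hlS]
        exact ENNReal.ofReal_sum_of_nonneg
          (fun m hm => hnn m (Finset.mem_filter.1 hm).1)
    _ ≤ ∑ m ∈ F.biUnion (fun i => T (c i)), ENNReal.ofReal (p m) :=
        Finset.sum_le_sum_of_subset hTsub
    _ ≤ ∑ i ∈ F, ∑ m ∈ T (c i), ENNReal.ofReal (p m) := sum_biUnion_le'' _ _ _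
    _ = ∑ i ∈ F, ENNReal.ofReal (p (c i)) := by
        refine Finset.sum_congr rfl (fun i hi => ?_)
        rw [refine_sum p hsum S (c i) (hc i hi).1 (hc i hi).2 (hcS i hi)]
        exact (ENNReal.ofReal_sum_of_nonneg
          (fun m hm => hnn m (Finset.mem_filter.1 hm).1)).symm

lemma finite_subcover {l : List X} {ι : Type*} (c : ι → List X)
    (hcov : chainEvent l ⊆ ⋃ i, chainEvent (c i)) :
    ∃ F : Finset ι, chainEvent l ⊆ ⋃ i ∈ F, chainEvent (c i) := by
  classical
  set enc : StrictTotalOrders X → (X × X → Bool) :=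
    fun π q => decide (π.1 q.1 q.2) with henc_def
  set K : Set (X × X → Bool) :=
    {f | ∀ a, f (a, a) = false} ∩
      ({f | ∀ a b c', f (a, b) = true → f (b, c') = true → f (a, c') = true} ∩
        {f | ∀ a b, a ≠ b → f (a, b) = true ∨ f (b, a) = true}) with hK_def
  set CC : List X → Set (X × X → Bool) :=
    fun c' => {f | c'.Chain' (fun x y => f (x, y) = true)} with hCC_def
  have hbasic : ∀ (q : X × X) (b : Bool),
      IsClosed {f : X × X → Bool | f q = b} ∧ IsOpen {f : X × X → Bool | f q = b} :=
    fun q b => ⟨by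
      have h : {f : X × X → Bool | f q = b} = (fun f : X × X → Bool => f q) ⁻¹' {b} := rfl
      rw [h]; exact IsClosed.preimage (continuous_apply q) (isClosed_discrete _), by
      have h : {f : X × X → Bool | f q = b} = (fun f : X × X → Bool => f q) ⁻¹' {b} := rfl
      rw [h]; exact IsOpen.preimage (continuous_apply q) (isOpen_discrete _)⟩
  have hCC : ∀ c' : List X, IsClosed (CC c') ∧ IsOpen (CC c') := by
    intro c'
    induction c' with
    | nil =>
      have : CC [] = Set.univ := by ext f; simp [hCC_def, List.Chain']
      rw [this]; exact ⟨isClosed_univ, isOpen_univ⟩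
    | cons x t ih =>
      cases t with
      | nil =>
        have : CC [x] = Set.univ := by ext f; simp [hCC_def, List.Chain']
        rw [this]; exact ⟨isClosed_univ, isOpen_univ⟩
      | cons y t' =>
        have : CC (x :: y :: t') = {f : X × X → Bool | f (x, y) = true} ∩ CC (y :: t') := by
          ext f; simp [hCC_def, List.Chain', List.isChain_cons_cons]
        rw [this]
        exact ⟨(hbasic _ _).1.inter ih.1, (hbasic _ _).2.inter ih.2⟩
  have hKclosed : IsClosed K := by
    refine IsClosed.inter ?_ (IsClosed.inter ?_ ?_)
    · have : {f : X × X → Bool | ∀ a, f (a, a) = false} = ⋂ a, {f | f (a, a) = false} := by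
        ext f; simp
      rw [this]; exact isClosed_iInter fun a => (hbasic _ _).1
    · have : {f : X × X → Bool | ∀ a b c', f (a, b) = true → f (b, c') = true → f (a, c') = true}
          = ⋂ a, ⋂ b, ⋂ c', ({f : X × X → Bool | f (a, b) = true}ᶜ ∪
              ({f | f (b, c') = true}ᶜ ∪ {f | f (a, c') = true})) := by
        ext f
        simp only [Set.mem_iInter, Set.mem_union, Set.mem_compl_iff, Set.mem_setOf_eq]
        constructor
        · intro h a b c'; by_cases h1 : f (a, b) = true
          · by_cases h2 : f (b, c') = true
            · exact Or.inr (Or.inr (h a b c' h1 h2))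
            · exact Or.inr (Or.inl h2)
          · exact Or.inl h1
        · intro h a b c' h1 h2
          rcases h a b c' with h' | h' | h'
          · exact absurd h1 h'
          · exact absurd h2 h'
          · exact h'
      rw [this]
      exact isClosed_iInter fun a => isClosed_iInter fun b => isClosed_iInter fun c' =>
        ((hbasic _ _).2.isClosed_compl).union
          (((hbasic _ _).2.isClosed_compl).union (hbasic _ _).1)
    · have : {f : X × X → Bool | ∀ a b, a ≠ b → f (a, b) = true ∨ f (b, a) = true}
          = ⋂ a, ⋂ b, if a = b then Set.univ
              else ({f : X × X → Bool | f (a, b) = true} ∪ {f | f (b, a) = true}) := by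
        ext f
        simp only [Set.mem_iInter]
        constructor
        · intro h a b
          by_cases hab : a = b
          · simp [hab]
          · simp only [if_neg hab]
            exact (h a b hab).elim (fun h' => Or.inl h') (fun h' => Or.inr h')
        · intro h a b hab
          have := h a b
          rw [if_neg hab] at this
          exact this.elim (fun h' => Or.inl h') (fun h' => Or.inr h')
      rw [this]
      refine isClosed_iInter fun a => isClosed_iInter fun b => ?_
      by_cases hab : a = b
      · rw [if_pos hab]; exact isClosed_univ
      · rw [if_neg hab]; exact (hbasic _ _).1.union (hbasic _ _).1
  have hencK : ∀ π : StrictTotalOrders X, enc π ∈ K := by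
    intro π
    refine ⟨fun a => ?_, fun a b c' h1 h2 => ?_, fun a b hab => ?_⟩
    · simp [henc_def, π.2.1 a]
    · simp only [henc_def, decide_eq_true_eq] at h1 h2 ⊢
      exact π.2.2.1 a b c' h1 h2
    · simp only [henc_def, decide_eq_true_eq]
      exact π.2.2.2 a b hab
  have hencCC : ∀ (π : StrictTotalOrders X) (c' : List X),
      enc π ∈ CC c' ↔ π ∈ chainEvent c' := by
    intro π c'
    constructor
    · intro h
      exact List.IsChain.imp (fun a b h' => by simpa [henc_def] using h') h
    · intro h
      exact List.IsChain.imp (fun a b h' => by simpa [henc_def] using h') h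
  have hsurj : ∀ f ∈ K, ∃ π : StrictTotalOrders X, enc π = f := by
    rintro f ⟨h1, h2, h3⟩
    refine ⟨⟨fun a b => f (a, b) = true, fun a h => ?_, h2, h3⟩, ?_⟩
    · have h' : f (a, a) = true := h
      rw [h1 a] at h'; exact Bool.false_ne_true h'
    · rw [henc_def]
      funext q
      obtain ⟨a, b⟩ := q
      cases h : f (a, b) <;> simp [h]
  have hcomp : IsCompact (K ∩ CC l) := (hKclosed.inter (hCC l).1).isCompact
  have hsub : K ∩ CC l ⊆ ⋃ i, CC (c i) := by
    rintro f ⟨hfK, hfl⟩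
    obtain ⟨π, rfl⟩ := hsurj f hfK
    obtain ⟨i, hi⟩ := Set.mem_iUnion.1 (hcov ((hencCC π l).1 hfl))
    exact Set.mem_iUnion.2 ⟨i, (hencCC π (c i)).2 hi⟩
  obtain ⟨F, hF⟩ := hcomp.elim_finite_subcover (fun i => CC (c i)) (fun i => (hCC _).2) hsub
  refine ⟨F, fun π hπ => ?_⟩
  have : enc π ∈ ⋃ i ∈ F, CC (c i) := hF ⟨hencK π, (hencCC π l).2 hπ⟩
  simp only [Set.mem_iUnion] at this ⊢
  obtain ⟨i, hiF, hi⟩ := this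
  exact ⟨i, hiF, (hencCC π (c i)).1 hi⟩

noncomputable def mcont (p : List X → ℝ) : Set (StrictTotalOrders X) → ENNReal :=
  fun s => if s = ∅ then 0 else
    ⨅ (l : List X) (_ : l.Nodup ∧ l ≠ [] ∧ s = chainEvent l), ENNReal.ofReal (p l)

lemma mcont_empty (p : List X → ℝ) : mcont p ∅ = 0 := if_pos rfl

noncomputable def om (p : List X → ℝ) : OuterMeasure (StrictTotalOrders X) :=
  OuterMeasure.ofFunction (mcont p) (mcont_empty p)

lemma om_apply (p : List X → ℝ) (s : Set (StrictTotalOrders X)) :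
    om p s = ⨅ (t : ℕ → Set (StrictTotalOrders X)) (_ : s ⊆ ⋃ n, t n), ∑' n, mcont p (t n) :=
  OuterMeasure.ofFunction_apply _ _ _

lemma mcont_chainEvent_le (p : List X → ℝ) {l : List X} (hl : l.Nodup) (hl0 : l ≠ []) :
    mcont p (chainEvent l) ≤ ENNReal.ofReal (p l) := by
  obtain ⟨π, hπ⟩ := exists_mem_chainEvent hl
  rw [mcont, if_neg (Set.nonempty_iff_ne_empty.1 ⟨π, hπ⟩)]
  exact iInf₂_le l ⟨hl, hl0, rfl⟩

lemma cover_tsum (p : List X → ℝ)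
    (hp : ∀ l : List X, l.Nodup → 0 ≤ p l ∧ p l ≤ 1)
    (hsum : ∀ (l : List X) (a : X), l.Nodup → l ≠ [] → a ∉ l →
      p l = ∑ i ∈ Finset.range (l.length + 1), p (l.insertIdx i a))
    {l : List X} (hl : l.Nodup) (hl0 : l ≠ [])
    (t : ℕ → Set (StrictTotalOrders X)) (ht : chainEvent l ⊆ ⋃ n, t n) :
    ENNReal.ofReal (p l) ≤ ∑' n, mcont p (t n) := by
  classical
  refine ENNReal.le_of_forall_pos_le_add (fun ε hε htop => ?_)
  have hfin : ∀ n, mcont p (t n) ≠ ⊤ := fun n => (lt_of_le_of_lt (ENNReal.le_tsum n) htop).ne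
  set δ : ℕ → ENNReal := fun n => (ε : ENNReal) / 2 * 2⁻¹ ^ n with hδ
  have hδ0 : ∀ n, δ n ≠ 0 := by
    intro n
    refine mul_ne_zero ?_ (pow_ne_zero _ (ENNReal.inv_ne_zero.2 ENNReal.ofNat_ne_top))
    simp only [ne_eq, ENNReal.div_eq_zero_iff, not_or]
    exact ⟨by exact_mod_cast hε.ne', ENNReal.ofNat_ne_top⟩
  have hchoice : ∀ n : {n : ℕ // (t n).Nonempty}, ∃ c : List X, c.Nodup ∧ c ≠ [] ∧
      t ↑n = chainEvent c ∧ ENNReal.ofReal (p c) ≤ mcont p (t ↑n) + δ ↑n := by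
    rintro ⟨n, hn⟩
    have hne : t n ≠ ∅ := hn.ne_empty
    have hval : mcont p (t n) = ⨅ (c : List X) (_ : c.Nodup ∧ c ≠ [] ∧ t n = chainEvent c),
        ENNReal.ofReal (p c) := if_neg hne
    have hlt : (⨅ (c : List X) (_ : c.Nodup ∧ c ≠ [] ∧ t n = chainEvent c),
        ENNReal.ofReal (p c)) < mcont p (t n) + δ n := by
      rw [← hval]
      exact ENNReal.lt_add_right (hfin n) (hδ0 n)
    simp only [iInf_lt_iff] at hlt
    obtain ⟨c, ⟨hc1, hc2, hc3⟩, hc4⟩ := hlt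
    exact ⟨c, hc1, hc2, hc3, hc4.le⟩
  choose c hc1 hc2 hc3 hc4 using hchoice
  have hcov : chainEvent l ⊆ ⋃ n : {n : ℕ // (t n).Nonempty}, chainEvent (c n) := by
    intro π hπ
    obtain ⟨n, hn⟩ := Set.mem_iUnion.1 (ht hπ)
    have hne : (t n).Nonempty := ⟨π, hn⟩
    refine Set.mem_iUnion.2 ⟨⟨n, hne⟩, ?_⟩
    have := hc3 ⟨n, hne⟩
    rw [← this]
    exact hn
  obtain ⟨F, hF⟩ := finite_subcover c hcov
  have hmain := le_sum_of_cover p hp hsum hl hl0 F c (fun i _ => ⟨hc1 i, hc2 i⟩) hF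
  refine le_trans hmain (le_trans (Finset.sum_le_sum (fun i _ => hc4 i)) ?_)
  have h1 : ∑ n ∈ F.image Subtype.val, (mcont p (t n) + δ n)
      = ∑ i ∈ F, (mcont p (t ↑i) + δ ↑i) :=
    Finset.sum_image (fun x _ y _ h => Subtype.val_injective h)
  calc ∑ i ∈ F, (mcont p (t ↑i) + δ ↑i)
      = ∑ n ∈ F.image Subtype.val, (mcont p (t n) + δ n) := h1.symm
    _ ≤ ∑' n, (mcont p (t n) + δ n) := ENNReal.sum_le_tsum _
    _ = (∑' n, mcont p (t n)) + ∑' n, δ n := ENNReal.tsum_add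
    _ ≤ (∑' n, mcont p (t n)) + ε := by
        refine add_le_add_right (le_of_eq ?_) _
        rw [hδ]
        rw [ENNReal.tsum_mul_left, ENNReal.tsum_geometric, ENNReal.one_sub_inv_two,
          inv_inv, ENNReal.div_mul_cancel (by norm_num) ENNReal.ofNat_ne_top]

lemma om_chainEvent (p : List X → ℝ)
    (hp : ∀ l : List X, l.Nodup → 0 ≤ p l ∧ p l ≤ 1)
    (hsum : ∀ (l : List X) (a : X), l.Nodup → l ≠ [] → a ∉ l →
      p l = ∑ i ∈ Finset.range (l.length + 1), p (l.insertIdx i a))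
    {l : List X} (hl : l.Nodup) (hl0 : l ≠ []) :
    om p (chainEvent l) = ENNReal.ofReal (p l) := by
  refine le_antisymm (le_trans (OuterMeasure.ofFunction_le _) (mcont_chainEvent_le p hl hl0)) ?_
  rw [om_apply]
  exact le_iInf fun t => le_iInf fun ht => cover_tsum p hp hsum hl hl0 t ht

lemma pair_bound (p : List X → ℝ)
    (hp : ∀ l : List X, l.Nodup → 0 ≤ p l ∧ p l ≤ 1)
    (hsum : ∀ (l : List X) (a : X), l.Nodup → l ≠ [] → a ∉ l →
      p l = ∑ i ∈ Finset.range (l.length + 1), p (l.insertIdx i a))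
    {c' l' : List X} (hc'1 : c'.Nodup) (hc'2 : c' ≠ []) (hl'1 : l'.Nodup) :
    om p (chainEvent c' ∩ chainEvent l') + om p (chainEvent c' \ chainEvent l')
      ≤ ENNReal.ofReal (p c') := by
  classical
  set S : Finset X := c'.toFinset ∪ l'.toFinset with hS
  have hcS : c'.toFinset ⊆ S := Finset.subset_union_left
  have hlS : l'.toFinset ⊆ S := Finset.subset_union_right
  set T : Finset (List X) := (OS S).filter (fun m => m.filter (fun x => decide (x ∈ c')) = c')
    with hT
  have hS_props : ∀ m ∈ OS S, m.Nodup ∧ m ≠ [] ∧ (∀ x ∈ c', x ∈ m) ∧ (∀ x ∈ l', x ∈ m) := by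
    intro m hm
    obtain ⟨hm1, hm2⟩ := mem_OS.1 hm
    have hmc : ∀ x ∈ c', x ∈ m := by
      intro x hx
      rw [← List.mem_toFinset, hm2]
      exact hcS (List.mem_toFinset.2 hx)
    have hml : ∀ x ∈ l', x ∈ m := by
      intro x hx
      rw [← List.mem_toFinset, hm2]
      exact hlS (List.mem_toFinset.2 hx)
    refine ⟨hm1, ?_, hmc, hml⟩
    intro h0
    obtain ⟨x, hx⟩ := List.exists_mem_of_ne_nil c' hc'2
    exact absurd (hmc x hx) (by simp [h0])
  have hsub1 : chainEvent c' ∩ chainEvent l' ⊆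
      ⋃ m ∈ T.filter (fun m => m.filter (fun x => decide (x ∈ l')) = l'), chainEvent m := by
    rintro π ⟨hπc, hπl⟩
    obtain ⟨m, hm1, hm2, hm3⟩ := exists_atom π S
    have hmOS : m ∈ OS S := mem_OS.2 ⟨hm1, hm2⟩
    obtain ⟨_, _, hmc, hml⟩ := hS_props m hmOS
    have hmT : m ∈ T := by
      rw [hT]
      exact Finset.mem_filter.2 ⟨hmOS, (mem_chainEvent_iff_filter hm1 hc'1 hmc hm3).1 hπc⟩
    exact Set.mem_iUnion₂.2 ⟨m, Finset.mem_filter.2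
      ⟨hmT, (mem_chainEvent_iff_filter hm1 hl'1 hml hm3).1 hπl⟩, hm3⟩
  have hsub2 : chainEvent c' \ chainEvent l' ⊆
      ⋃ m ∈ T.filter (fun m => ¬(m.filter (fun x => decide (x ∈ l')) = l')), chainEvent m := by
    rintro π ⟨hπc, hπl⟩
    obtain ⟨m, hm1, hm2, hm3⟩ := exists_atom π S
    have hmOS : m ∈ OS S := mem_OS.2 ⟨hm1, hm2⟩
    obtain ⟨_, _, hmc, hml⟩ := hS_props m hmOS
    have hmT : m ∈ T := by
      rw [hT]
      exact Finset.mem_filter.2 ⟨hmOS, (mem_chainEvent_iff_filter hm1 hc'1 hmc hm3).1 hπc⟩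
    refine Set.mem_iUnion₂.2 ⟨m, Finset.mem_filter.2 ⟨hmT, ?_⟩, hm3⟩
    intro h
    exact hπl ((mem_chainEvent_iff_filter hm1 hl'1 hml hm3).2 h)
  have hbound : ∀ (G : Finset (List X)), G ⊆ OS S →
      ∀ s : Set (StrictTotalOrders X), s ⊆ (⋃ m ∈ G, chainEvent m) →
      om p s ≤ ∑ m ∈ G, ENNReal.ofReal (p m) := by
    intro G hG s hs
    refine le_trans (measure_mono hs) (le_trans (measure_biUnion_finset_le _ _) ?_)
    refine Finset.sum_le_sum (fun m hm => ?_)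
    obtain ⟨hm1, hm2, _, _⟩ := hS_props m (hG hm)
    exact le_trans (OuterMeasure.ofFunction_le _) (mcont_chainEvent_le p hm1 hm2)
  calc om p (chainEvent c' ∩ chainEvent l') + om p (chainEvent c' \ chainEvent l')
      ≤ (∑ m ∈ T.filter (fun m => m.filter (fun x => decide (x ∈ l')) = l'),
            ENNReal.ofReal (p m)) +
          ∑ m ∈ T.filter (fun m => ¬(m.filter (fun x => decide (x ∈ l')) = l')),
            ENNReal.ofReal (p m) := by
        refine add_le_add ?_ ?_
        · exact hbound _ (le_trans (Finset.filter_subset _ _) (Finset.filter_subset _ _)) _ hsub1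
        · exact hbound _ (le_trans (Finset.filter_subset _ _) (Finset.filter_subset _ _)) _ hsub2
    _ = ∑ m ∈ T, ENNReal.ofReal (p m) := Finset.sum_filter_add_sum_filter_not T _ _
    _ = ENNReal.ofReal (p c') := by
        rw [hT, refine_sum p hsum S c' hc'1 hc'2 hcS]
        exact (ENNReal.ofReal_sum_of_nonneg
          (fun m hm => (hp m (mem_OS.1 (Finset.mem_filter.1 hm).1).1).1)).symm

lemma caratheodory_le (p : List X → ℝ)
    (hp : ∀ l : List X, l.Nodup → 0 ≤ p l ∧ p l ≤ 1)
    (hsum : ∀ (l : List X) (a : X), l.Nodup → l ≠ [] → a ∉ l →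
      p l = ∑ i ∈ Finset.range (l.length + 1), p (l.insertIdx i a)) :
    (ordersMeasurableSpace X) ≤ (om p).caratheodory := by
  refine MeasurableSpace.generateFrom_le ?_
  rintro s ⟨l, hl, rfl⟩
  rw [OuterMeasure.isCaratheodory_iff_le]
  intro u
  rcases eq_or_ne l [] with rfl | hl0
  · have huniv : chainEvent ([] : List X) = Set.univ := by
      ext π; simp [chainEvent, List.Chain']
    rw [huniv]
    simp
  · have hom : om p u = ⨅ (t : ℕ → Set (StrictTotalOrders X)) (_ : u ⊆ ⋃ n, t n),
        ∑' n, mcont p (t n) := om_apply p u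
    rw [hom]
    refine le_iInf fun t => le_iInf fun htu => ?_
    calc om p (u ∩ chainEvent l) + om p (u \ chainEvent l)
        ≤ (∑' n, om p (t n ∩ chainEvent l)) + ∑' n, om p (t n \ chainEvent l) := by
          refine add_le_add ?_ ?_
          · refine le_trans (measure_mono ?_) (measure_iUnion_le _)
            rintro π ⟨h1, h2⟩
            obtain ⟨n, hn⟩ := Set.mem_iUnion.1 (htu h1)
            exact Set.mem_iUnion.2 ⟨n, hn, h2⟩
          · refine le_trans (measure_mono ?_) (measure_iUnion_le _)
            rintro π ⟨h1, h2⟩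
            obtain ⟨n, hn⟩ := Set.mem_iUnion.1 (htu h1)
            exact Set.mem_iUnion.2 ⟨n, hn, h2⟩
      _ = ∑' n, (om p (t n ∩ chainEvent l) + om p (t n \ chainEvent l)) := ENNReal.tsum_add.symm
      _ ≤ ∑' n, mcont p (t n) := by
          refine ENNReal.tsum_le_tsum (fun n => ?_)
          by_cases hne : t n = ∅
          · rw [hne]
            simp [mcont_empty]
          · rw [show mcont p (t n) = ⨅ (c : List X)
                (_ : c.Nodup ∧ c ≠ [] ∧ t n = chainEvent c), ENNReal.ofReal (p c) from if_neg hne]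
            refine le_iInf fun c' => le_iInf fun hc' => ?_
            obtain ⟨hc1, hc2, hc3⟩ := hc'
            rw [hc3]
            exact pair_bound p hp hsum hc1 hc2 hl

lemma chainEvent_eq_biUnion {l : List X} (a : X) (ha : a ∉ l) :
    chainEvent l = ⋃ i ∈ Finset.range (l.length + 1), chainEvent (l.insertIdx i a) := by
  ext π
  simp only [Set.mem_iUnion, Finset.mem_range]
  constructor
  · intro h
    obtain ⟨i, hi, hci⟩ := exists_insertIdx_chain a h ha
    exact ⟨i, by omega, hci⟩
  · rintro ⟨i, hi, hci⟩
    show l.Chain' π.1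
    have hi' : i ≤ l.length := by omega
    have hfil : (l.insertIdx i a).filter (fun x => decide (x ∈ l)) = l := by
      rw [filter_insertIdx_self (by simp [ha]) hi', List.filter_eq_self.2 (by simp)]
    have hsub : l.Sublist (l.insertIdx i a) := by
      conv_lhs => rw [← hfil]
      exact List.filter_sublist
    exact chain'_of_sublist hci hsub

lemma pairwiseDisjoint_insertIdx {l : List X} (hl : l.Nodup) {a : X} (ha : a ∉ l) :
    (↑(Finset.range (l.length + 1)) : Set ℕ).PairwiseDisjoint
      (fun i => chainEvent (l.insertIdx i a)) := by
  intro i hi j hj hij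
  simp only [Finset.coe_range, Set.mem_Iio] at hi hj
  refine Set.disjoint_left.2 ?_
  intro π hπi hπj
  have hi' : i ≤ l.length := by omega
  have hj' : j ≤ l.length := by omega
  have heq := chain_eq_of_toFinset_eq (nodup_insertIdx hl ha hi') (nodup_insertIdx hl ha hj')
    (by rw [toFinset_insertIdx hi', toFinset_insertIdx hj']) hπi hπj
  exact hij (insertIdx_inj_pos ha hi' hj' heq)

lemma measurableSet_chainEvent {l : List X} (hl : l.Nodup) : MeasurableSet (chainEvent l) :=
  MeasurableSpace.measurableSet_generateFrom ⟨l, hl, rfl⟩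

end OrderMarginals

/-- Marginals lemma: given numbers `p ā ∈ [0,1]` for every finite sequence (list) of
distinct elements of `X`, there exists a probability measure `μ` on the strict total
orders of `X` with `μ {π : a₁ ≻ ⋯ ≻ a_n} = p (a₁,…,a_n)` for every nonempty such
sequence, if and only if `p (a) = 1` for every singleton and, for every nonempty
sequence of distinct elements and every fresh element `a`,
`p (a₁,…,a_n) = ∑_{i=0}^{n} p (a₁,…,a_i,a,a_{i+1},…,a_n)`. -/
theorem order_marginals {X : Type*} (p : List X → ℝ)
    (hp : ∀ l : List X, l.Nodup → 0 ≤ p l ∧ p l ≤ 1) :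
    (∃ μ : Measure (StrictTotalOrders X), IsProbabilityMeasure μ ∧
        ∀ l : List X, l.Nodup → l ≠ [] → μ (chainEvent l) = ENNReal.ofReal (p l)) ↔
      ((∀ a : X, p [a] = 1) ∧
        ∀ (l : List X) (a : X), l.Nodup → l ≠ [] → a ∉ l →
          p l = ∑ i ∈ Finset.range (l.length + 1), p (l.insertIdx i a)) := by
  classical
  constructor
  · rintro ⟨μ, hμ, hμl⟩
    constructor
    · intro a
      have h1 : chainEvent [a] = (Set.univ : Set (StrictTotalOrders X)) := by
        ext π; simp [chainEvent, List.Chain']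
      have h2 := hμl [a] (by simp) (by simp)
      rw [h1, measure_univ] at h2
      exact ENNReal.ofReal_eq_one.1 h2.symm
    · intro l a hl hl0 ha
      have hsum' : μ (chainEvent l)
          = ∑ i ∈ Finset.range (l.length + 1), μ (chainEvent (l.insertIdx i a)) := by
        rw [OrderMarginals.chainEvent_eq_biUnion a ha]
        exact measure_biUnion_finset (OrderMarginals.pairwiseDisjoint_insertIdx hl ha)
          (fun i _ => OrderMarginals.measurableSet_chainEvent
            (OrderMarginals.nodup_insertIdx hl ha (by
              simp only [Finset.mem_range] at *; omega)))
      have hvals : ∀ i ∈ Finset.range (l.length + 1),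
          μ (chainEvent (l.insertIdx i a)) = ENNReal.ofReal (p (l.insertIdx i a)) := by
        intro i hi
        have hi' : i ≤ l.length := by simp only [Finset.mem_range] at hi; omega
        exact hμl _ (OrderMarginals.nodup_insertIdx hl ha hi')
          (OrderMarginals.insertIdx_ne_nil hi')
      have hnn : ∀ i ∈ Finset.range (l.length + 1), 0 ≤ p (l.insertIdx i a) := by
        intro i hi
        have hi' : i ≤ l.length := by simp only [Finset.mem_range] at hi; omega
        exact (hp _ (OrderMarginals.nodup_insertIdx hl ha hi')).1
      have key : ENNReal.ofReal (p l)
          = ENNReal.ofReal (∑ i ∈ Finset.range (l.length + 1), p (l.insertIdx i a)) := by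
        rw [← hμl l hl hl0, hsum', Finset.sum_congr rfl hvals,
          ENNReal.ofReal_sum_of_nonneg hnn]
      exact (ENNReal.ofReal_eq_ofReal_iff (hp l hl).1 (Finset.sum_nonneg hnn)).1 key
  · rintro ⟨h1, h2⟩
    rcases isEmpty_or_nonempty X with hX | hX
    · refine ⟨MeasureTheory.Measure.dirac
        ⟨fun a _ => isEmptyElim a, fun a => isEmptyElim a,
          fun a => isEmptyElim a, fun a => isEmptyElim a⟩, MeasureTheory.Measure.dirac.isProbabilityMeasure, ?_⟩
      intro l hl hl0
      cases l with
      | nil => exact absurd rfl hl0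
      | cons a t => exact isEmptyElim a
    · obtain ⟨a0⟩ := hX
      set μ : Measure (StrictTotalOrders X) :=
        (OrderMarginals.om p).toMeasure (OrderMarginals.caratheodory_le p hp h2) with hμ
      have hval : ∀ l : List X, l.Nodup → l ≠ [] → μ (chainEvent l) = ENNReal.ofReal (p l) := by
        intro l hl hl0
        rw [hμ, toMeasure_apply _ _ (OrderMarginals.measurableSet_chainEvent hl)]
        exact OrderMarginals.om_chainEvent p hp h2 hl hl0
      refine ⟨μ, ?_, hval⟩
      constructor
      have huniv : (Set.univ : Set (StrictTotalOrders X)) = chainEvent [a0] := by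
        ext π; simp [chainEvent, List.Chain']
      rw [huniv, hval [a0] (by simp) (by simp), h1 a0]
      simp
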